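/- Fix n ≥ 1, a point x ∈ EuclideanSpace ℝ (Fin n), and a symmetric positive-definite matrix C : Matrix (Fin n) (Fin n) ℝ. Define the multivariate Gaussian log-density in the mean parameter, ℓ : EuclideanSpace ℝ (Fin n) → ℝ, by ℓ(m) := −(n/2)·log(2π) − (1/2)·log(det C) − (1/2)·⟪x − m, C⁻¹ *ᵥ (x − m)⟫, where ⟪·,·⟫ is the Euclidean inner product and *ᵥ is matrix–vector multiplication. Then for every m, ℓ has gradient C⁻¹ *ᵥ (x − m) at m (i.e., its Fréchet derivative at m is v ↦ ⟪C⁻¹ *ᵥ (x − m), v⟫); consequently C *ᵥ (gradient of ℓ at m) = x − m. -/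

import Mathlib

open Matrix

/-- The gradient of the multivariate Gaussian log-density with respect to the
mean parameter is `C⁻¹ *ᵥ (x − m)`, hence `C *ᵥ (gradient)` equals `x − m`. -/
theorem stmt_5 {n : ℕ} (hn : 1 ≤ n) (x : EuclideanSpace ℝ (Fin n))
    (C : Matrix (Fin n) (Fin n) ℝ) (hCsymm : C.IsSymm) (hC : C.PosDef)
    (ℓ : EuclideanSpace ℝ (Fin n) → ℝ)
    (hℓ : ∀ m : EuclideanSpace ℝ (Fin n),
      ℓ m = -((n : ℝ) / 2) * Real.log (2 * Real.pi) - (1 / 2) * Real.log C.det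
        - (1 / 2) * (inner ℝ (x - m)
            ((WithLp.equiv 2 (Fin n → ℝ)).symm (C⁻¹.mulVec (fun i => x i - m i))) : ℝ)) :
    ∀ m : EuclideanSpace ℝ (Fin n),
      HasGradientAt ℓ
        ((WithLp.equiv 2 (Fin n → ℝ)).symm (C⁻¹.mulVec (fun i => x i - m i))) m ∧
      C.mulVec (fun i =>
        ((WithLp.equiv 2 (Fin n → ℝ)).symm (C⁻¹.mulVec (fun i => x i - m i))) i)
        = fun i => x i - m i := by
  intro m
  have hdet : IsUnit C.det := isUnit_iff_ne_zero.mpr (ne_of_gt hC.det_pos)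
  -- inverse is symmetric, hence hermitian
  have hAsymm : (C⁻¹).IsSymm := by
    rw [Matrix.IsSymm, Matrix.transpose_nonsing_inv, hCsymm.eq]
  have hAherm : (C⁻¹).IsHermitian := hAsymm
  have hLsym : LinearMap.IsSymmetric (Matrix.toEuclideanLin C⁻¹) :=
    Matrix.isHermitian_iff_isSymmetric.mp hAherm
  let L : EuclideanSpace ℝ (Fin n) →L[ℝ] EuclideanSpace ℝ (Fin n) := LinearMap.toContinuousLinearMap (Matrix.toEuclideanLin C⁻¹)
  have hLval : ∀ u : EuclideanSpace ℝ (Fin n), L u =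
      (WithLp.equiv 2 (Fin n → ℝ)).symm (C⁻¹.mulVec (fun i => u i)) := fun u => rfl
  have key : ∀ u : EuclideanSpace ℝ (Fin n), (WithLp.equiv 2 (Fin n → ℝ)).symm
      (C⁻¹.mulVec (fun i => x i - u i)) = L (x - u) := by
    intro u
    rw [hLval]
    congr 1
  constructor
  · -- gradient
    rw [key]
    rw [hasGradientAt_iff_hasFDerivAt]
    have hsub : HasFDerivAt (fun m' : EuclideanSpace ℝ (Fin n) => x - m')
        (-(ContinuousLinearMap.id ℝ (EuclideanSpace ℝ (Fin n)))) m := by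
      exact (hasFDerivAt_id (𝕜 := ℝ) m).const_sub x
    have hLm : HasFDerivAt (fun m' : EuclideanSpace ℝ (Fin n) => L (x - m'))
        (L.comp (-(ContinuousLinearMap.id ℝ (EuclideanSpace ℝ (Fin n))))) m := (L.hasFDerivAt).comp m hsub
    have hinner := (hsub.inner ℝ hLm)
    have hℓ' : ℓ = fun m' => -((n : ℝ) / 2) * Real.log (2 * Real.pi)
        - (1 / 2) * Real.log C.det - (1 / 2) * (inner ℝ (x - m') (L (x - m')) : ℝ) := by
      funext m'
      rw [hℓ m', key m']
    rw [hℓ']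
    have h2 : HasFDerivAt (fun m' : EuclideanSpace ℝ (Fin n) => -((n : ℝ) / 2) * Real.log (2 * Real.pi)
        - (1 / 2) * Real.log C.det - (1 / 2) * (inner ℝ (x - m') (L (x - m')) : ℝ))
        ((0 : EuclideanSpace ℝ (Fin n) →L[ℝ] ℝ) - ((1/2 : ℝ) •
          ((fderivInnerCLM ℝ (x - m, L (x - m))).comp
            ((-(ContinuousLinearMap.id ℝ (EuclideanSpace ℝ (Fin n)))).prod
              (L.comp (-(ContinuousLinearMap.id ℝ (EuclideanSpace ℝ (Fin n))))))))) m := by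
      exact (hasFDerivAt_const _ m).sub (hinner.const_mul (1/2 : ℝ))
    refine h2.congr_fderiv ?_
    ext v
    simp only [ContinuousLinearMap.sub_apply, ContinuousLinearMap.smul_apply,
      ContinuousLinearMap.zero_apply, ContinuousLinearMap.comp_apply,
      ContinuousLinearMap.prod_apply, ContinuousLinearMap.neg_apply,
      ContinuousLinearMap.coe_id', id_eq, fderivInnerCLM_apply, smul_eq_mul,
      mul_zero, zero_sub, inner_neg_neg]
    have hsymL : (inner ℝ (x - m) (L v) : ℝ) = inner ℝ (L (x - m)) v := by
      exact (hLsym (x - m) v).symm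
    have := InnerProductSpace.toDual_apply_apply (𝕜 := ℝ) (x := L (x - m)) (y := v)
    rw [this]
    rw [map_neg, inner_neg_right, inner_neg_left, hsymL, real_inner_comm (L (x-m)) v]
    ring
  · show C.mulVec (C⁻¹.mulVec (fun i => x i - m i)) = fun i => x i - m i
    rw [Matrix.mulVec_mulVec, Matrix.mul_nonsing_inv C hdet, Matrix.one_mulVec]
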